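/- Let G be a finite group, a + b > d(G), and let V_a and V_b be the two parts of the bipartite graph Γ*_{a,b}(G), i.e. the sets of non-isolated vertices among G^a and G^b respectively. If 0 < a < b, then |V_a| < |V_b|. -/

import Mathlib

theorem stmt_11 {G : Type*} [Group G] [Finite G] [Nontrivial G]
    (a b : ℕ) (ha : 0 < a) (hab : a < b) (hd : Group.rank G < a + b) :
    Nat.card {x : Fin a → G //
        ∃ y : Fin b → G, Subgroup.closure (Set.range x ∪ Set.range y) = ⊤} <
    Nat.card {y : Fin b → G //
        ∃ x : Fin a → G, Subgroup.closure (Set.range x ∪ Set.range y) = ⊤} := by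
  classical
  haveI : Fintype G := Fintype.ofFinite G
  set A := {x : Fin a → G //
      ∃ y : Fin b → G, Subgroup.closure (Set.range x ∪ Set.range y) = ⊤} with hA
  set B := {y : Fin b → G //
      ∃ x : Fin a → G, Subgroup.closure (Set.range x ∪ Set.range y) = ⊤} with hB
  -- the injection A → B
  have hfmem : ∀ (x : Fin a → G) (y : Fin b → G),
      Subgroup.closure (Set.range x ∪ Set.range y) = ⊤ →
      ∃ x' : Fin a → G, Subgroup.closure (Set.range x' ∪ Set.range
        (fun i : Fin b => if h : (i : ℕ) < a then x ⟨i, h⟩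
          else y ⟨(i : ℕ) - a, by omega⟩)) = ⊤ := by
    intro x y hxy
    refine ⟨fun i : Fin a => y ⟨b - a + (i : ℕ), by omega⟩, ?_⟩
    rw [eq_top_iff, ← hxy]
    apply Subgroup.closure_mono
    rintro g (⟨i, rfl⟩ | ⟨j, rfl⟩)
    · right
      refine ⟨⟨(i : ℕ), by omega⟩, ?_⟩
      simp [i.isLt]
    · by_cases hj : (j : ℕ) < b - a
      · right
        refine ⟨⟨a + (j : ℕ), by omega⟩, ?_⟩
        have h1 : ¬ (a + (j : ℕ) < a) := by omega
        beta_reduce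
        rw [dif_neg h1]
        exact congrArg y (Fin.ext (by simp))
      · left
        refine ⟨⟨(j : ℕ) - (b - a), by omega⟩, ?_⟩
        beta_reduce
        exact congrArg y (Fin.ext (by simp; omega))
  let f : A → B := fun p =>
    ⟨fun i : Fin b => if h : (i : ℕ) < a then p.1 ⟨i, h⟩
        else p.2.choose ⟨(i : ℕ) - a, by omega⟩,
      hfmem p.1 p.2.choose p.2.choose_spec⟩
  have hfinj : Function.Injective f := by
    intro p q hpq
    have h : ∀ i : Fin a, p.1 i = q.1 i := by
      intro i
      have := congrFun (congrArg Subtype.val hpq) ⟨(i : ℕ), i.isLt.trans hab⟩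
      simpa [f, i.isLt] using this
    exact Subtype.ext (funext h)
  -- build two elements of B with the same first a coordinates
  obtain ⟨S, hScard, hSclos⟩ := Group.rank_spec G
  have hScard' : S.card < a + b := hScard ▸ hd
  let e : Fin S.card → G := fun i => (S.equivFin.symm i : G)
  let x0 : Fin a → G := fun i => if h : (i : ℕ) < S.card then e ⟨i, h⟩ else 1
  let s : Fin (b - 1) → G := fun j =>
    if h : a + (j : ℕ) < S.card then e ⟨a + (j : ℕ), h⟩ else 1
  have hcov : ∀ c : G, Subgroup.closure (Set.range x0 ∪ Set.range
      (fun i : Fin b => if h : (i : ℕ) < b - 1 then s ⟨i, h⟩ else c)) = ⊤ := by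
    intro c
    rw [eq_top_iff, ← hSclos]
    apply Subgroup.closure_mono
    intro g hg
    set k : Fin S.card := S.equivFin ⟨g, hg⟩ with hk
    have hg' : g = e k := by simp [e, hk]
    by_cases hka : (k : ℕ) < a
    · left
      refine ⟨⟨(k : ℕ), hka⟩, ?_⟩
      show (if h : (k : ℕ) < S.card then e ⟨(k : ℕ), h⟩ else 1) = g
      rw [dif_pos k.isLt]
      exact hg'.symm
    · right
      have h1 : (k : ℕ) - a < b - 1 := by omega
      have h2 : a + ((k : ℕ) - a) < S.card := by omega
      refine ⟨⟨(k : ℕ) - a, by omega⟩, ?_⟩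
      show (if h : (k : ℕ) - a < b - 1 then s ⟨(k : ℕ) - a, h⟩ else c) = g
      rw [dif_pos h1]
      show (if h : a + ((k : ℕ) - a) < S.card then e ⟨a + ((k : ℕ) - a), h⟩ else 1) = g
      rw [dif_pos h2]
      exact (congrArg e (Fin.ext (by simp; omega))).trans hg'.symm
  obtain ⟨g0, hg0⟩ := exists_ne (1 : G)
  let yc : G → B := fun c =>
    ⟨fun i : Fin b => if h : (i : ℕ) < b - 1 then s ⟨i, h⟩ else c, x0, hcov c⟩
  have hyc_ne : yc 1 ≠ yc g0 := by
    intro h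
    have := congrFun (congrArg Subtype.val h) ⟨b - 1, by omega⟩
    simp only [yc, lt_irrefl, dif_neg, not_false_eq_true, dite_false, Fin.val_mk] at this
    exact hg0 this.symm
  have hab1 : a ≤ b - 1 := by omega
  have hyc_first : ∀ c : G, ∀ i : Fin b, (hi : (i : ℕ) < a) →
      (yc c).1 i = s ⟨i, hi.trans_le hab1⟩ := by
    intro c i hi
    show (if h : (i : ℕ) < b - 1 then s ⟨i, h⟩ else c) = _
    rw [dif_pos (hi.trans_le hab1)]
  -- at least one of yc 1, yc g0 is not in the range of f
  have key : ∃ z : B, z ∉ Set.range f := by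
    by_cases h1 : yc 1 ∈ Set.range f
    · refine ⟨yc g0, fun h2 => ?_⟩
      obtain ⟨p, hp⟩ := h1
      obtain ⟨q, hq⟩ := h2
      have hpq : p = q := by
        refine Subtype.ext (funext fun i => ?_)
        have hia : ((⟨(i : ℕ), i.isLt.trans hab⟩ : Fin b) : ℕ) < a := i.isLt
        have e1 := congrFun (congrArg Subtype.val hp) ⟨(i : ℕ), i.isLt.trans hab⟩
        have e2 := congrFun (congrArg Subtype.val hq) ⟨(i : ℕ), i.isLt.trans hab⟩
        have e1' : p.1 i = (yc 1).1 ⟨(i : ℕ), i.isLt.trans hab⟩ := by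
          rw [← e1]; simp [f, i.isLt]
        have e2' : q.1 i = (yc g0).1 ⟨(i : ℕ), i.isLt.trans hab⟩ := by
          rw [← e2]; simp [f, i.isLt]
        rw [e1', e2', hyc_first 1 _ hia, hyc_first g0 _ hia]
      exact hyc_ne (by rw [← hp, ← hq, hpq])
    · exact ⟨yc 1, h1⟩
  obtain ⟨z, hz⟩ := key
  have : Fintype.card A < Fintype.card B :=
    Fintype.card_lt_of_injective_of_notMem f hfinj hz
  simpa [Nat.card_eq_fintype_card] using this
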